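/- For all real r ≥ 1 and α ≥ 2, the sequence n ↦ (Σ_{i=1}^{n} i^r)^α / Σ_{i=1}^{n} i^{α(r+1)-1} is (weakly) decreasing in n for n ≥ 1. -/

import Mathlib

open Real Set

namespace Stmt12



/-- integral of a linear function -/
lemma integral_linear (a b A B : ℝ) :
    ∫ t in a..b, (A + B * t) = A * (b - a) + B * ((b ^ 2 - a ^ 2) / 2) := by
  have h1 : (fun t : ℝ => A + B * t) = (fun t : ℝ => A + B * id t) := rfl
  rw [h1, intervalIntegral.integral_add (f := fun _ => A) (g := fun t => B * id t) (intervalIntegrable_const)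
      ((continuous_const.mul continuous_id).intervalIntegrable _ _),
    intervalIntegral.integral_const_mul]
  simp only [id]
  rw [integral_id, intervalIntegral.integral_const, smul_eq_mul]
  ring

/-- tangent line inequality for convex rpow -/
lemma tangent {β x y : ℝ} (hβ : 1 ≤ β) (hx : 0 ≤ x) (hy : 0 < y) :
    y ^ β + β * y ^ (β - 1) * (x - y) ≤ x ^ β := by
  have hs : -1 ≤ x / y - 1 := by
    have : 0 ≤ x / y := div_nonneg hx hy.le
    linarith
  have h := one_add_mul_self_le_rpow_one_add hs hβ
  have h1 : 1 + (x / y - 1) = x / y := by ring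
  rw [h1] at h
  have h2 : (x / y) ^ β = x ^ β / y ^ β := Real.div_rpow hx hy.le β
  rw [h2] at h
  have hyβ : 0 < y ^ β := Real.rpow_pos_of_pos hy β
  have h3 : (1 + β * (x / y - 1)) * y ^ β ≤ x ^ β := by
    rw [← le_div_iff₀ hyβ]; exact h
  have h4 : y ^ (β - 1) = y ^ β / y := by
    rw [Real.rpow_sub hy, Real.rpow_one]
  calc y ^ β + β * y ^ (β - 1) * (x - y)
      = y ^ β + β * (y ^ β / y) * (x - y) := by rw [h4]
    _ = (1 + β * (x / y - 1)) * y ^ β := by field_simp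
    _ ≤ x ^ β := h3





lemma int_shift {q : ℝ} (hq : -1 < q) (d : ℝ) :
    ∫ u in (0:ℝ)..1, (d + u) ^ q = ((d + 1) ^ (q + 1) - d ^ (q + 1)) / (q + 1) := by
  have h := intervalIntegral.integral_comp_add_left (a := (0:ℝ)) (b := 1)
    (fun t : ℝ => t ^ q) d
  rw [h, add_zero]
  exact integral_rpow (Or.inl hq)

lemma chord_concave {p a b t : ℝ} (hp0 : 0 ≤ p) (hp1 : p ≤ 1) (ha : 0 ≤ a) (hab : a < b)
    (ht1 : a ≤ t) (ht2 : t ≤ b) :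
    ((b - t) * a ^ p + (t - a) * b ^ p) / (b - a) ≤ t ^ p := by
  have hba : 0 < b - a := by linarith
  have hw1 : (0:ℝ) ≤ (b - t) / (b - a) := div_nonneg (by linarith) hba.le
  have hw2 : (0:ℝ) ≤ (t - a) / (b - a) := div_nonneg (by linarith) hba.le
  have hw : (b - t) / (b - a) + (t - a) / (b - a) = 1 := by field_simp; ring
  have hcc := (Real.concaveOn_rpow hp0 hp1).2 (mem_Ici.2 ha)
    (mem_Ici.2 (by linarith : (0:ℝ) ≤ b)) hw1 hw2 hw
  simp only [smul_eq_mul] at hcc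
  have harg : (b - t) / (b - a) * a + (t - a) / (b - a) * b = t := by
    field_simp; ring
  rw [harg] at hcc
  calc ((b - t) * a ^ p + (t - a) * b ^ p) / (b - a)
      = (b - t) / (b - a) * a ^ p + (t - a) / (b - a) * b ^ p := by
        field_simp
    _ ≤ t ^ p := hcc

lemma chord_convex {p a b t : ℝ} (hp : 1 ≤ p) (ha : 0 ≤ a) (hab : a < b)
    (ht1 : a ≤ t) (ht2 : t ≤ b) :
    t ^ p ≤ ((b - t) * a ^ p + (t - a) * b ^ p) / (b - a) := by
  have hba : 0 < b - a := by linarith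
  have hw1 : (0:ℝ) ≤ (b - t) / (b - a) := div_nonneg (by linarith) hba.le
  have hw2 : (0:ℝ) ≤ (t - a) / (b - a) := div_nonneg (by linarith) hba.le
  have hw : (b - t) / (b - a) + (t - a) / (b - a) = 1 := by field_simp; ring
  have hcc := (convexOn_rpow hp).2 (mem_Ici.2 ha)
    (mem_Ici.2 (by linarith : (0:ℝ) ≤ b)) hw1 hw2 hw
  simp only [smul_eq_mul] at hcc
  have harg : (b - t) / (b - a) * a + (t - a) / (b - a) * b = t := by
    field_simp; ring
  rw [harg] at hcc
  calc t ^ p ≤ (b - t) / (b - a) * a ^ p + (t - a) / (b - a) * b ^ p := hcc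
    _ = ((b - t) * a ^ p + (t - a) * b ^ p) / (b - a) := by
        field_simp

/-- trapezoid rule underestimates integral of concave rpow -/
lemma trapz_concave {p a b : ℝ} (hp0 : 0 ≤ p) (hp1 : p ≤ 1) (ha : 0 ≤ a) (hab : a ≤ b) :
    (p + 1) * (b - a) * (a ^ p + b ^ p) / 2 ≤ b ^ (p + 1) - a ^ (p + 1) := by
  rcases eq_or_lt_of_le hab with rfl | hab
  · simp
  have hba : 0 < b - a := by linarith
  have hp1' : (0:ℝ) < p + 1 := by linarith
  have key : ∫ t in a..b, (((b - t) * a ^ p + (t - a) * b ^ p) / (b - a))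
      ≤ ∫ t in a..b, t ^ p := by
    apply intervalIntegral.integral_mono_on hab.le
    · apply Continuous.intervalIntegrable; fun_prop
    · exact (Continuous.intervalIntegrable
        (continuous_id.rpow_const (fun _ => Or.inr hp0)) _ _)
    · intro t ht
      exact chord_concave hp0 hp1 ha hab ht.1 ht.2
  have hL : ∫ t in a..b, (((b - t) * a ^ p + (t - a) * b ^ p) / (b - a))
      = (b - a) * (a ^ p + b ^ p) / 2 := by
    have hrw : (fun t : ℝ => ((b - t) * a ^ p + (t - a) * b ^ p) / (b - a))
        = fun t : ℝ => (b * a ^ p - a * b ^ p) / (b - a) + ((b ^ p - a ^ p) / (b - a)) * t := by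
      funext t; field_simp; ring
    rw [hrw, integral_linear]
    field_simp
    ring
  have hR : ∫ t in a..b, t ^ p = (b ^ (p + 1) - a ^ (p + 1)) / (p + 1) :=
    integral_rpow (Or.inl (by linarith))
  rw [hL, hR] at key
  rw [div_le_div_iff₀ (by norm_num) hp1'] at key
  nlinarith [key]

/-- trapezoid rule overestimates integral of convex rpow -/
lemma trapz_convex {p a b : ℝ} (hp : 1 ≤ p) (ha : 0 ≤ a) (hab : a ≤ b) :
    b ^ (p + 1) - a ^ (p + 1) ≤ (p + 1) * (b - a) * (a ^ p + b ^ p) / 2 := by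
  rcases eq_or_lt_of_le hab with rfl | hab
  · simp
  have hba : 0 < b - a := by linarith
  have hp1' : (0:ℝ) < p + 1 := by linarith
  have key : ∫ t in a..b, t ^ p
      ≤ ∫ t in a..b, (((b - t) * a ^ p + (t - a) * b ^ p) / (b - a)) := by
    apply intervalIntegral.integral_mono_on hab.le
    · exact (Continuous.intervalIntegrable
        (continuous_id.rpow_const (fun _ => Or.inr (by linarith))) _ _)
    · apply Continuous.intervalIntegrable; fun_prop
    · intro t ht
      exact chord_convex hp ha hab ht.1 ht.2
  have hL : ∫ t in a..b, (((b - t) * a ^ p + (t - a) * b ^ p) / (b - a))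
      = (b - a) * (a ^ p + b ^ p) / 2 := by
    have hrw : (fun t : ℝ => ((b - t) * a ^ p + (t - a) * b ^ p) / (b - a))
        = fun t : ℝ => (b * a ^ p - a * b ^ p) / (b - a) + ((b ^ p - a ^ p) / (b - a)) * t := by
      funext t; field_simp; ring
    rw [hrw, integral_linear]
    field_simp
    ring
  have hR : ∫ t in a..b, t ^ p = (b ^ (p + 1) - a ^ (p + 1)) / (p + 1) :=
    integral_rpow (Or.inl (by linarith))
  rw [hL, hR] at key
  rw [div_le_div_iff₀ hp1' (by norm_num)] at key
  nlinarith [key]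



-- placeholders from p1/p2 (assumed proven)

lemma cont_shift_rpow {q : ℝ} (hq : 0 ≤ q) (d : ℝ) :
    Continuous (fun u : ℝ => (d + u) ^ q) :=
  (continuous_const.add continuous_id).rpow_const (fun _ => Or.inr hq)

/-- E-step : second difference of x^(r+1)/(r+1) dominates central difference of x^r /2,
for 1 ≤ r ≤ 2 -/
lemma Estep {r c : ℝ} (hr : 1 ≤ r) (hr2 : r ≤ 2) (hc : 1 ≤ c) :
    ((c+1) ^ r - (c-1) ^ r) / 2
      ≤ ((c+1) ^ (r+1) - 2 * c ^ (r+1) + (c-1) ^ (r+1)) / (r+1) := by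
  have hc0 : (0:ℝ) ≤ c - 1 := by linarith
  have hq : -1 < r := by linarith
  have hq' : -1 < r - 1 := by linarith
  -- pointwise inequality on [0,1]
  have hpt : ∀ u ∈ Icc (0:ℝ) 1,
      r * ((c-1+u) ^ (r-1) + (c+u) ^ (r-1)) / 2 ≤ (c+u) ^ r - (c-1+u) ^ r := by
    intro u hu
    have h := trapz_concave (p := r - 1) (a := c-1+u) (b := c+u)
      (by linarith) (by linarith) (by linarith [hu.1]) (by linarith)
    have e1 : r - 1 + 1 = r := by ring
    rw [e1] at h
    calc r * ((c-1+u) ^ (r-1) + (c+u) ^ (r-1)) / 2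
        = r * ((c+u) - (c-1+u)) * ((c-1+u) ^ (r-1) + (c+u) ^ (r-1)) / 2 := by
          ring
      _ ≤ (c+u) ^ r - (c-1+u) ^ r := h
  -- integrate
  have hint : ∫ u in (0:ℝ)..1, (r * ((c-1+u) ^ (r-1) + (c+u) ^ (r-1)) / 2)
      ≤ ∫ u in (0:ℝ)..1, ((c+u) ^ r - (c-1+u) ^ r) := by
    apply intervalIntegral.integral_mono_on (by norm_num)
    · apply Continuous.intervalIntegrable
      have h1 := cont_shift_rpow (by linarith : (0:ℝ) ≤ r - 1) (c-1)
      have h2 := cont_shift_rpow (by linarith : (0:ℝ) ≤ r - 1) c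
      continuity
    · apply Continuous.intervalIntegrable
      have h1 := cont_shift_rpow (by linarith : (0:ℝ) ≤ r) (c-1)
      have h2 := cont_shift_rpow (by linarith : (0:ℝ) ≤ r) c
      continuity
    · exact hpt
  -- compute both sides
  have hL : ∫ u in (0:ℝ)..1, (r * ((c-1+u) ^ (r-1) + (c+u) ^ (r-1)) / 2)
      = ((c+1) ^ r - (c-1) ^ r) / 2 := by
    have e1 : (fun u : ℝ => r * ((c-1+u) ^ (r-1) + (c+u) ^ (r-1)) / 2)
        = (fun u : ℝ => (r/2) * ((c-1+u) ^ (r-1)) + (r/2) * ((c+u) ^ (r-1))) := by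
      funext u; ring
    rw [e1, intervalIntegral.integral_add, intervalIntegral.integral_const_mul,
      intervalIntegral.integral_const_mul, int_shift hq' (c-1), int_shift hq' c]
    · have e2 : r - 1 + 1 = r := by ring
      have e3 : c - 1 + 1 = c := by ring
      rw [e2, e3]
      field_simp
      ring
    · exact (continuous_const.mul (cont_shift_rpow (by linarith : (0:ℝ) ≤ r-1) (c-1))).intervalIntegrable _ _
    · exact (continuous_const.mul (cont_shift_rpow (by linarith : (0:ℝ) ≤ r-1) c)).intervalIntegrable _ _
  have hR : ∫ u in (0:ℝ)..1, ((c+u) ^ r - (c-1+u) ^ r)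
      = ((c+1) ^ (r+1) - 2 * c ^ (r+1) + (c-1) ^ (r+1)) / (r+1) := by
    rw [intervalIntegral.integral_sub
      ((cont_shift_rpow (by linarith : (0:ℝ) ≤ r) c).intervalIntegrable _ _)
      ((cont_shift_rpow (by linarith : (0:ℝ) ≤ r) (c-1)).intervalIntegrable _ _),
      int_shift hq c, int_shift hq (c-1)]
    have e3 : c - 1 + 1 = c := by ring
    rw [e3]
    field_simp
    ring
  rw [hL, hR] at hint
  exact hint

/-- the key local inequality: the ratio (x^r+(x-1)^r)/(x^(r+1)-(x-1)^(r+1)) is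
nonincreasing, two-point version -/
lemma u_step {r c : ℝ} (hr : 1 ≤ r) (hc : 1 ≤ c) :
    ((c+1) ^ r + c ^ r) * (c ^ (r+1) - (c-1) ^ (r+1))
      ≤ (c ^ r + (c-1) ^ r) * ((c+1) ^ (r+1) - c ^ (r+1)) := by
  have hc0 : (0:ℝ) ≤ c - 1 := by linarith
  have hrp : (0:ℝ) < r + 1 := by linarith
  rcases le_total r 2 with hr2 | hr2
  · -- case 1 ≤ r ≤ 2, via E/I decomposition
    set I1 := (c ^ (r+1) - (c-1) ^ (r+1)) / (r+1) with hI1def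
    set I2 := ((c+1) ^ (r+1) - c ^ (r+1)) / (r+1) with hI2def
    have hI1pos : 0 < I1 := by
      have : (c-1) ^ (r+1) < c ^ (r+1) :=
        Real.rpow_lt_rpow hc0 (by linarith) hrp
      apply div_pos (by linarith) hrp
    have hI12 : I1 ≤ I2 := by
      have h := chord_convex (p := r+1) (a := c-1) (b := c+1) (t := c)
        (by linarith) hc0 (by linarith) (by linarith) (by linarith)
      have e : ((c+1) - c) * (c-1) ^ (r+1) + (c - (c-1)) * (c+1) ^ (r+1)
          = (c-1) ^ (r+1) + (c+1) ^ (r+1) := by ring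
      rw [e] at h
      have h2 : ((c+1) : ℝ) - (c-1) = 2 := by ring
      rw [h2] at h
      rw [hI1def, hI2def, div_le_div_iff₀ hrp hrp]
      nlinarith [h, hrp]
    have hE2 : 0 ≤ (c ^ r + (c+1) ^ r) / 2 - I2 := by
      have h := trapz_convex (p := r) (a := c) (b := c+1) hr (by linarith) (by linarith)
      rw [hI2def]
      have e : ((c:ℝ)+1) - c = 1 := by ring
      rw [e, mul_one] at h
      rw [sub_nonneg, div_le_div_iff₀ hrp (by norm_num : (0:ℝ) < 2)]
      nlinarith
    have hE1 : ((c+1) ^ r + c ^ r) / 2 - I2 ≤ ((c-1) ^ r + c ^ r) / 2 - I1 := by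
      have h := Estep hr hr2 hc
      rw [hI1def, hI2def]
      have e : ((c+1) ^ (r+1) - 2 * c ^ (r+1) + (c-1) ^ (r+1)) / (r+1) = I2 - I1 := by
        rw [hI1def, hI2def]; field_simp; ring
      rw [hI1def, hI2def] at e
      rw [← sub_nonneg]
      have h2 := h.trans_eq e
      linarith
    -- combine
    have key : ((c+1) ^ r + c ^ r) * I1 ≤ (c ^ r + (c-1) ^ r) * I2 := by
      set E2v := (c ^ r + (c+1) ^ r) / 2 - I2 with hE2v
      set E1v := ((c-1) ^ r + c ^ r) / 2 - I1 with hE1v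
      have h1 : E2v * I1 ≤ E2v * I2 := mul_le_mul_of_nonneg_left hI12 hE2
      have h2 : E2v * I2 ≤ E1v * I2 := by
        apply mul_le_mul_of_nonneg_right _ (hI1pos.le.trans hI12)
        rw [hE2v]
        linarith [hE1]
      have e1 : (c+1) ^ r + c ^ r = 2 * (E2v + I2) := by rw [hE2v]; ring
      have e2 : c ^ r + (c-1) ^ r = 2 * (E1v + I1) := by rw [hE1v]; ring
      rw [e1, e2]
      nlinarith [h1, h2]
    have eL : c ^ (r+1) - (c-1) ^ (r+1) = (r+1) * I1 := by
      rw [hI1def]; field_simp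
    have eR : (c+1) ^ (r+1) - c ^ (r+1) = (r+1) * I2 := by
      rw [hI2def]; field_simp
    rw [eL, eR]
    calc ((c+1) ^ r + c ^ r) * ((r+1) * I1) = (r+1) * (((c+1) ^ r + c ^ r) * I1) := by ring
      _ ≤ (r+1) * ((c ^ r + (c-1) ^ r) * I2) := by
          exact mul_le_mul_of_nonneg_left key hrp.le
      _ = (c ^ r + (c-1) ^ r) * ((r+1) * I2) := by ring
  · -- case r ≥ 2
    rcases eq_or_lt_of_le hc with hceq | hc1
    · -- c = 1
      rw [← hceq]
      have h0r : ((0:ℝ)) ^ r = 0 := Real.zero_rpow (by linarith)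
      have h0r1 : ((0:ℝ)) ^ (r+1) = 0 := Real.zero_rpow (by linarith)
      have e0 : ((1:ℝ) - 1) = 0 := by norm_num
      have e2 : ((1:ℝ) + 1) = 2 := by norm_num
      rw [e0, e2, h0r, h0r1, Real.one_rpow, Real.one_rpow]
      have h2r1 : (2:ℝ) ^ (r+1) = 2 ^ r * 2 := by
        rw [Real.rpow_add (by norm_num : (0:ℝ) < 2), Real.rpow_one]
      have h2r : (2:ℝ) ≤ 2 ^ r := by
        calc (2:ℝ) = 2 ^ (1:ℝ) := (Real.rpow_one 2).symm
          _ ≤ 2 ^ r := Real.rpow_le_rpow_of_exponent_le one_le_two hr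
      rw [h2r1]
      nlinarith [h2r]
    · -- c > 1
      have hcpos : (0:ℝ) < c := by linarith
      set x := 1/c with hxdef
      have hx0 : 0 < x := by rw [hxdef]; positivity
      have hx1 : x < 1 := by
        rw [hxdef]
        rw [div_lt_one hcpos]
        exact hc1
      have h1px : (0:ℝ) < 1 + x := by linarith
      have h1mx : (0:ℝ) < 1 - x := by linarith
      -- Bernoulli
      have hBern : 1 - r * (x*x) ≤ (1 - x*x) ^ r := by
        have h := one_add_mul_self_le_rpow_one_add
          (s := -(x*x)) (by nlinarith : (-1:ℝ) ≤ -(x*x)) hr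
        have e1 : (1:ℝ) + -(x*x) = 1 - x*x := by ring
        rw [e1] at h
        linarith
      have hAB : (1+x) ^ r * (1-x) ^ r = (1 - x*x) ^ r := by
        rw [← Real.mul_rpow h1px.le h1mx.le]
        congr 1
        ring
      -- A - B >= 2 r x
      have hAmB : 2 * r * x ≤ (1+x) ^ r - (1-x) ^ r := by
        have hint : ∫ t in (1-x)..(1+x), t ^ (r-1)
            = ((1+x) ^ r - (1-x) ^ r) / r := by
          rw [integral_rpow (Or.inl (by linarith : (-1:ℝ) < r-1))]
          norm_num
        have hpt : ∀ t ∈ Icc (1-x) (1+x), (2-r) + (r-1) * t ≤ t ^ (r-1) := by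
          intro t ht
          have h := tangent (β := r-1) (by linarith) (by linarith [ht.1] : (0:ℝ) ≤ t)
            (by norm_num : (0:ℝ) < 1)
          rw [Real.one_rpow, Real.one_rpow] at h
          calc (2-r) + (r-1) * t = 1 + (r-1) * (t - 1) := by ring
            _ ≤ t ^ (r-1) := by linarith [h]
        have hmono : ∫ t in (1-x)..(1+x), ((2-r) + (r-1) * t)
            ≤ ∫ t in (1-x)..(1+x), t ^ (r-1) := by
          apply intervalIntegral.integral_mono_on (by linarith)
          · exact (continuous_const.add (continuous_const.mul continuous_id)).intervalIntegrable _ _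
          · exact (continuous_id.rpow_const (fun _ => Or.inr (by linarith))).intervalIntegrable _ _
          · exact hpt
        rw [hint, integral_linear] at hmono
        have e : (2-r) * ((1+x) - (1-x)) + (r-1) * (((1+x) ^ 2 - (1-x) ^ 2) / 2) = 2*x := by
          ring
        rw [e] at hmono
        have := (le_div_iff₀ (by linarith : (0:ℝ) < r)).mp hmono
        linarith
      -- scaled inequality
      have scaled : ((1+x) ^ r + 1) * (1 - (1-x) ^ (r+1))
          ≤ (1 + (1-x) ^ r) * ((1+x) ^ (r+1) - 1) := by
        have e1 : (1+x) ^ (r+1) = (1+x) ^ r * (1+x) := by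
          rw [Real.rpow_add h1px, Real.rpow_one]
        have e2 : (1-x) ^ (r+1) = (1-x) ^ r * (1-x) := by
          rw [Real.rpow_add h1mx, Real.rpow_one]
        rw [e1, e2]
        nlinarith [mul_le_mul_of_nonneg_left hAmB hx0.le, hBern, hAB]
      -- unscale
      have e3 : c + 1 = c * (1+x) := by
        rw [hxdef]; field_simp
      have e4 : c - 1 = c * (1-x) := by
        rw [hxdef]; field_simp
      have f1 : (c+1) ^ r = c ^ r * (1+x) ^ r := by
        rw [e3, Real.mul_rpow hcpos.le h1px.le]
      have f2 : (c-1) ^ r = c ^ r * (1-x) ^ r := by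
        rw [e4, Real.mul_rpow hcpos.le h1mx.le]
      have f3 : (c+1) ^ (r+1) = c ^ (r+1) * (1+x) ^ (r+1) := by
        rw [e3, Real.mul_rpow hcpos.le h1px.le]
      have f4 : (c-1) ^ (r+1) = c ^ (r+1) * (1-x) ^ (r+1) := by
        rw [e4, Real.mul_rpow hcpos.le h1mx.le]
      have hpos : (0:ℝ) ≤ c ^ r * c ^ (r+1) :=
        (mul_pos (Real.rpow_pos_of_pos hcpos r) (Real.rpow_pos_of_pos hcpos (r+1))).le
      rw [f1, f2, f3, f4]
      calc (c ^ r * (1+x) ^ r + c ^ r) * (c ^ (r+1) - c ^ (r+1) * (1-x) ^ (r+1))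
          = c ^ r * c ^ (r+1) * (((1+x) ^ r + 1) * (1 - (1-x) ^ (r+1))) := by ring
        _ ≤ c ^ r * c ^ (r+1) * ((1 + (1-x) ^ r) * ((1+x) ^ (r+1) - 1)) :=
            mul_le_mul_of_nonneg_left scaled hpos
        _ = (c ^ r + c ^ r * (1-x) ^ r) * (c ^ (r+1) * (1+x) ^ (r+1) - c ^ (r+1)) := by ring





noncomputable def Sp (r : ℝ) (n : ℕ) : ℝ := ∑ i ∈ Finset.Icc 1 n, (i:ℝ) ^ r

noncomputable def g (r : ℝ) (i : ℕ) : ℝ := (i:ℝ) ^ r + ((i:ℝ) - 1) ^ r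

noncomputable def v (r : ℝ) (i : ℕ) : ℝ := (i:ℝ) ^ (r+1) - ((i:ℝ) - 1) ^ (r+1)

lemma Sp_zero (r : ℝ) : Sp r 0 = 0 := by simp [Sp]

lemma Sp_succ (r : ℝ) (n : ℕ) : Sp r (n+1) = Sp r n + ((n+1:ℕ):ℝ) ^ r := by
  unfold Sp
  rw [Finset.sum_Icc_succ_top (by omega : 1 ≤ n + 1)]

lemma Sp_nonneg (r : ℝ) (n : ℕ) : 0 ≤ Sp r n := by
  unfold Sp
  apply Finset.sum_nonneg
  intro i hi
  positivity

lemma Sp_pos (r : ℝ) {n : ℕ} (hn : 1 ≤ n) : 0 < Sp r n := by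
  unfold Sp
  apply Finset.sum_pos
  · intro i hi
    have hi1 : 1 ≤ i := (Finset.mem_Icc.mp hi).1
    have : (0:ℝ) < (i:ℝ) := by exact_mod_cast Nat.lt_of_lt_of_le Nat.zero_lt_one hi1
    exact Real.rpow_pos_of_pos this r
  · exact ⟨1, Finset.mem_Icc.mpr ⟨le_refl 1, hn⟩⟩

lemma v_pos {r : ℝ} (hr : 1 ≤ r) {i : ℕ} (hi : 1 ≤ i) : 0 < v r i := by
  unfold v
  have h1 : (1:ℝ) ≤ (i:ℝ) := by exact_mod_cast hi
  have : ((i:ℝ) - 1) ^ (r+1) < (i:ℝ) ^ (r+1) :=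
    Real.rpow_lt_rpow (by linarith) (by linarith) (by linarith)
  linarith

lemma g_nonneg {r : ℝ} {i : ℕ} (hi : 1 ≤ i) : 0 ≤ g r i := by
  unfold g
  have h1 : (1:ℝ) ≤ (i:ℝ) := by exact_mod_cast hi
  have h2 := Real.rpow_nonneg (by linarith : (0:ℝ) ≤ (i:ℝ) - 1) r
  have h3 := Real.rpow_nonneg (by linarith : (0:ℝ) ≤ (i:ℝ)) r
  linarith

lemma sum_g {r : ℝ} (hr : 1 ≤ r) (n : ℕ) :
    ∑ i ∈ Finset.Icc 1 (n+1), g r i = Sp r (n+1) + Sp r n := by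
  induction n with
  | zero =>
      show ∑ i ∈ Finset.Icc 1 1, g r i = Sp r 1 + Sp r 0
      rw [Finset.Icc_self, Finset.sum_singleton, Sp_zero]
      unfold g Sp
      simp
      rw [Real.zero_rpow (by linarith : r ≠ 0)]
  | succ n ih =>
      rw [Finset.sum_Icc_succ_top (by omega : 1 ≤ n + 2), ih]
      rw [Sp_succ r (n+1), Sp_succ r n]
      unfold g
      have e : ((n+2:ℕ):ℝ) - 1 = ((n+1:ℕ):ℝ) := by push_cast; ring
      rw [e]
      ring

lemma sum_v {r : ℝ} (hr : 1 ≤ r) (n : ℕ) :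
    ∑ i ∈ Finset.Icc 1 n, v r i = (n:ℝ) ^ (r+1) := by
  induction n with
  | zero =>
      simp
      rw [Real.zero_rpow (by linarith : r + 1 ≠ 0)]
  | succ n ih =>
      rw [Finset.sum_Icc_succ_top (by omega : 1 ≤ n + 1), ih]
      unfold v
      have e : ((n+1:ℕ):ℝ) - 1 = ((n:ℕ):ℝ) := by push_cast; ring
      rw [e]
      ring

lemma u_adj {r : ℝ} (hr : 1 ≤ r) {i : ℕ} (hi : 1 ≤ i) :
    g r (i+1) * v r i ≤ g r i * v r (i+1) := by
  have h1 : (1:ℝ) ≤ (i:ℝ) := by exact_mod_cast hi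
  have h := u_step hr h1
  unfold g v
  have e : ((i+1:ℕ):ℝ) = (i:ℝ) + 1 := by push_cast; ring
  rw [e]
  have e2 : (i:ℝ) + 1 - 1 = (i:ℝ) := by ring
  rw [e2]
  exact h



lemma u_chain {r : ℝ} (hr : 1 ≤ r) {i N : ℕ} (hi : 1 ≤ i) (hiN : i ≤ N) :
    g r N * v r i ≤ g r i * v r N := by
  induction N, hiN using Nat.le_induction with
  | base => exact le_refl _
  | succ N hN ih =>
      have hN1 : 1 ≤ N := le_trans hi hN
      have hadj := u_adj hr hN1
      have hvN := v_pos hr hN1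
      have hvi := v_pos hr hi
      have hvN1 := v_pos hr (by omega : 1 ≤ N + 1)
      refine le_of_mul_le_mul_right ?_ hvN
      calc g r (N+1) * v r i * v r N = (g r (N+1) * v r N) * v r i := by ring
        _ ≤ (g r N * v r (N+1)) * v r i := mul_le_mul_of_nonneg_right hadj hvi.le
        _ = (g r N * v r i) * v r (N+1) := by ring
        _ ≤ (g r i * v r N) * v r (N+1) := mul_le_mul_of_nonneg_right ih hvN1.le
        _ = g r i * v r (N+1) * v r N := by ring

/-- monotonicity of (S_k + S_{k+1}) / (k+1)^(r+1)  -/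
lemma meanB {r : ℝ} (hr : 1 ≤ r) (j : ℕ) :
    (Sp r (j+1) + Sp r (j+2)) * ((j+1:ℕ):ℝ) ^ (r+1)
      ≤ (Sp r j + Sp r (j+1)) * ((j+2:ℕ):ℝ) ^ (r+1) := by
  have hG2 : Sp r (j+1) + Sp r (j+2) = ∑ i ∈ Finset.Icc 1 (j+2), g r i := by
    rw [sum_g hr (j+1)]; ring
  have hG1 : Sp r j + Sp r (j+1) = ∑ i ∈ Finset.Icc 1 (j+1), g r i := by
    rw [sum_g hr j]; ring
  have hV1 : ((j+1:ℕ):ℝ) ^ (r+1) = ∑ i ∈ Finset.Icc 1 (j+1), v r i :=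
    (sum_v hr (j+1)).symm
  have hV2 : ((j+2:ℕ):ℝ) ^ (r+1) = ∑ i ∈ Finset.Icc 1 (j+2), v r i :=
    (sum_v hr (j+2)).symm
  rw [hG1, hG2, hV1, hV2]
  rw [Finset.sum_Icc_succ_top (by omega : 1 ≤ j + 2) (f := g r),
      Finset.sum_Icc_succ_top (by omega : 1 ≤ j + 2) (f := v r)]
  have key : g r (j+2) * ∑ i ∈ Finset.Icc 1 (j+1), v r i
      ≤ (∑ i ∈ Finset.Icc 1 (j+1), g r i) * v r (j+2) := by
    rw [Finset.mul_sum, Finset.sum_mul]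
    apply Finset.sum_le_sum
    intro i hi
    have hi1 : 1 ≤ i := (Finset.mem_Icc.mp hi).1
    have hi2 : i ≤ j + 2 := le_trans (Finset.mem_Icc.mp hi).2 (by omega)
    exact u_chain hr hi1 hi2
  nlinarith [key]





/-- pointwise gradient-type bound -/
lemma pt_bound {β x y m : ℝ} (hβ : 1 ≤ β) (hx : 0 ≤ x) (hy : 0 < y) (hm : 0 < m)
    (h1 : y < x → m ≤ y) (h2 : x < y → y ≤ m) :
    β * m ^ (β - 1) * (x - y) ≤ x ^ β - y ^ β := by
  have hβ0 : (0:ℝ) ≤ β - 1 := by linarith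
  rcases lt_trichotomy x y with hlt | heq | hgt
  · have hym : y ≤ m := h2 hlt
    have hpow : y ^ (β-1) ≤ m ^ (β-1) := Real.rpow_le_rpow hy.le hym hβ0
    have ht := tangent hβ hx hy
    have hmm : m ^ (β-1) * (x - y) ≤ y ^ (β-1) * (x - y) :=
      mul_le_mul_of_nonpos_right hpow (by linarith)
    have := mul_le_mul_of_nonneg_left hmm (by linarith : (0:ℝ) ≤ β)
    nlinarith [ht, this]
  · subst heq; simp
  · have hym : m ≤ y := h1 hgt
    have hpow : m ^ (β-1) ≤ y ^ (β-1) := Real.rpow_le_rpow hm.le hym hβ0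
    have ht := tangent hβ hx hy
    have hmm : m ^ (β-1) * (x - y) ≤ y ^ (β-1) * (x - y) :=
      mul_le_mul_of_nonneg_right hpow (by linarith)
    have := mul_le_mul_of_nonneg_left hmm (by linarith : (0:ℝ) ≤ β)
    nlinarith [ht, this]

/-- key comparison of integrals of β-th powers of linear functions -/
lemma psi_mono {β u1 u2 v1 v2 : ℝ} (hβ : 1 ≤ β) (hu1 : 0 ≤ u1) (hu2 : 0 < u2)
    (hv1 : 0 < v1) (hv2 : 0 < v2) (hslope : v2 ≤ v1)
    (hmean : u2 + v2/2 ≤ u1 + v1/2) :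
    ∫ t in (0:ℝ)..1, (u2 + t*v2) ^ β ≤ ∫ t in (0:ℝ)..1, (u1 + t*v1) ^ β := by
  -- construct the pivot m
  obtain ⟨m, hm0, hmprop⟩ : ∃ m : ℝ, 0 < m ∧ ∀ t ∈ Icc (0:ℝ) 1,
      ((u2 + t*v2 < u1 + t*v1 → m ≤ u2 + t*v2) ∧
       (u1 + t*v1 < u2 + t*v2 → u2 + t*v2 ≤ m)) := by
    rcases le_or_gt u2 u1 with hD0 | hD0
    · refine ⟨u2, hu2, fun t ht => ⟨fun _ => ?_, fun h => absurd h (not_lt.mpr ?_)⟩⟩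
      · nlinarith [ht.1, hv2.le]
      · nlinarith [ht.1, ht.2, hv2.le]
    · rcases le_or_gt (u1 + v1) (u2 + v2) with hD1 | hD1
      · refine ⟨u2 + v2, by linarith, fun t ht => ⟨fun h => absurd h (not_lt.mpr ?_), fun _ => ?_⟩⟩
        · -- ψ1 ≤ ψ2 always:  (1-t)*(u1-u2) + t*(u1+v1-u2-v2) ≤ 0
          nlinarith [ht.1, ht.2]
        · nlinarith [ht.2, hv2.le]
      · -- crossing case
        have hvv : 0 < v1 - v2 := by nlinarith
        set ts := (u2 - u1) / (v1 - v2) with hts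
        have hts0 : 0 < ts := div_pos (by linarith) hvv
        have hts1 : ts < 1 := by
          rw [hts, div_lt_one hvv]; linarith
        refine ⟨u2 + ts * v2, by nlinarith, fun t ht => ⟨fun h => ?_, fun h => ?_⟩⟩
        · -- ψ2 < ψ1 at t means t > ts
          have htts : ts ≤ t := by
            by_contra hc
            push_neg at hc
            have : t * (v1 - v2) < u2 - u1 := by
              calc t * (v1 - v2) < ts * (v1 - v2) := by
                    exact mul_lt_mul_of_pos_right hc hvv
                _ = u2 - u1 := by rw [hts]; field_simp
            nlinarith
          nlinarith [hv2.le]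
        · have htts : t ≤ ts := by
            by_contra hc
            push_neg at hc
            have : u2 - u1 < t * (v1 - v2) := by
              calc u2 - u1 = ts * (v1 - v2) := by rw [hts]; field_simp
                _ < t * (v1 - v2) := mul_lt_mul_of_pos_right hc hvv
            nlinarith
          nlinarith [hv2.le]
  -- continuity facts
  have hc1 : Continuous fun t : ℝ => (u1 + t*v1) ^ β :=
    (continuous_const.add (continuous_id.mul continuous_const)).rpow_const
      (fun _ => Or.inr (by linarith))
  have hc2 : Continuous fun t : ℝ => (u2 + t*v2) ^ β :=
    (continuous_const.add (continuous_id.mul continuous_const)).rpow_const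
      (fun _ => Or.inr (by linarith))
  -- integral comparison
  have hmono : ∫ t in (0:ℝ)..1, ((u2 + t*v2) ^ β + β * m ^ (β-1) * ((u1 + t*v1) - (u2 + t*v2)))
      ≤ ∫ t in (0:ℝ)..1, (u1 + t*v1) ^ β := by
    apply intervalIntegral.integral_mono_on (by norm_num)
    · apply Continuous.intervalIntegrable
      apply hc2.add
      exact continuous_const.mul ((continuous_const.add (continuous_id.mul continuous_const)).sub
        (continuous_const.add (continuous_id.mul continuous_const)))
    · exact hc1.intervalIntegrable _ _
    · intro t ht
      have hx : 0 ≤ u1 + t*v1 := by nlinarith [ht.1, hv1.le]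
      have hy : 0 < u2 + t*v2 := by nlinarith [ht.1, hv2.le]
      have hp := pt_bound hβ hx hy hm0 (hmprop t ht).1 (hmprop t ht).2
      linarith
  have hsplit : ∫ t in (0:ℝ)..1, ((u2 + t*v2) ^ β + β * m ^ (β-1) * ((u1 + t*v1) - (u2 + t*v2)))
      = (∫ t in (0:ℝ)..1, (u2 + t*v2) ^ β)
        + β * m ^ (β-1) * ((u1 - u2) + (v1 - v2)/2) := by
    rw [intervalIntegral.integral_add (hc2.intervalIntegrable _ _)]
    · congr 1
      have e : (fun t : ℝ => β * m ^ (β-1) * ((u1 + t*v1) - (u2 + t*v2)))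
          = (fun t : ℝ => β * m ^ (β-1) * ((u1 - u2) + (v1 - v2) * t)) := by
        funext t; ring
      rw [e, intervalIntegral.integral_const_mul, integral_linear]
      ring
    · exact (continuous_const.mul ((continuous_const.add (continuous_id.mul continuous_const)).sub
        (continuous_const.add (continuous_id.mul continuous_const)))).intervalIntegrable _ _
  rw [hsplit] at hmono
  have hfac : 0 ≤ β * m ^ (β-1) * ((u1 - u2) + (v1 - v2)/2) := by
    apply mul_nonneg
    · apply mul_nonneg (by linarith)
      exact (Real.rpow_pos_of_pos hm0 _).le
    · linarith
  linarith

/-- increment of the α-th power as an integral -/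
lemma incr_eq {α u a : ℝ} (hα : 1 ≤ α) (hu : 0 ≤ u) (ha : 0 < a) :
    (u+a) ^ α - u ^ α = α * a * ∫ t in (0:ℝ)..1, (u + t*a) ^ (α-1) := by
  have hderiv : ∀ t ∈ uIcc (0:ℝ) 1,
      HasDerivAt (fun t : ℝ => (u + t*a) ^ α) (α * a * (u + t*a) ^ (α-1)) t := by
    intro t ht
    have hlin : HasDerivAt (fun t : ℝ => u + t*a) a t := by
      simpa using ((hasDerivAt_id t).mul_const a).const_add u
    have := hlin.rpow_const (p := α) (Or.inr hα)
    convert this using 1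
    ring
  have hcont : Continuous fun t : ℝ => α * a * (u + t*a) ^ (α-1) := by
    apply continuous_const.mul
    exact (continuous_const.add (continuous_id.mul continuous_const)).rpow_const
      (fun _ => Or.inr (by linarith))
  have hftc := intervalIntegral.integral_eq_sub_of_hasDerivAt hderiv
    (hcont.intervalIntegrable _ _)
  rw [intervalIntegral.integral_const_mul] at hftc
  simp only [one_mul, zero_mul, add_zero] at hftc
  linarith [hftc]





/-- normalized increment representation :
`S(k+1)^α - S(k)^α = α * (k+1)^s * ∫ ψ^(α-1)` where `ψ(t) = (S k + t (k+1)^r)/(k+1)^(r+1)` -/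
lemma incr_norm {r α : ℝ} (hr : 1 ≤ r) (hα : 2 ≤ α) (k : ℕ) :
    Sp r (k+1) ^ α - Sp r k ^ α
      = α * ((k+1:ℕ):ℝ) ^ (α*(r+1)-1) *
        ∫ t in (0:ℝ)..1,
          (Sp r k / ((k+1:ℕ):ℝ) ^ (r+1) + t * (1 / ((k+1:ℕ):ℝ))) ^ (α-1) := by
  set c : ℝ := ((k+1:ℕ):ℝ) with hc
  have hc0 : (0:ℝ) < c := by rw [hc]; exact_mod_cast Nat.succ_pos k
  have hc1 : (1:ℝ) ≤ c := by rw [hc]; exact_mod_cast Nat.succ_le_succ (Nat.zero_le k)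
  have ha : (0:ℝ) < c ^ r := Real.rpow_pos_of_pos hc0 r
  have hcr1 : (0:ℝ) < c ^ (r+1) := Real.rpow_pos_of_pos hc0 (r+1)
  have hS : 0 ≤ Sp r k := Sp_nonneg r k
  have h1 := incr_eq (α := α) (u := Sp r k) (a := c ^ r) (by linarith) hS ha
  rw [Sp_succ r k, ← hc, h1]
  -- now rewrite the integrand
  have hint : ∀ t ∈ Icc (0:ℝ) 1,
      (Sp r k + t * c ^ r) ^ (α-1)
        = (c ^ (r+1)) ^ (α-1) * (Sp r k / c ^ (r+1) + t * (1 / c)) ^ (α-1) := by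
    intro t ht
    have e1 : Sp r k + t * c ^ r = c ^ (r+1) * (Sp r k / c ^ (r+1) + t * (1 / c)) := by
      have e2 : c ^ (r+1) = c ^ r * c := by
        rw [Real.rpow_add hc0 r 1, Real.rpow_one]
      rw [e2]
      field_simp
    rw [e1, Real.mul_rpow hcr1.le]
    have : 0 ≤ Sp r k / c ^ (r+1) + t * (1 / c) := by
      have := ht.1
      positivity
    exact this
  have hrw : ∫ t in (0:ℝ)..1, (Sp r k + t * c ^ r) ^ (α-1)
      = (c ^ (r+1)) ^ (α-1) * ∫ t in (0:ℝ)..1, (Sp r k / c ^ (r+1) + t * (1/c)) ^ (α-1) := by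
    rw [← intervalIntegral.integral_const_mul]
    apply intervalIntegral.integral_congr
    intro t ht
    have ht' : t ∈ Icc (0:ℝ) 1 := by
      rcases ht with ⟨h1', h2'⟩
      constructor <;> simp_all [min_def, max_def]
    exact hint t ht'
  rw [hrw]
  have hexp : c ^ r * (c ^ (r+1)) ^ (α-1) = c ^ (α*(r+1)-1) := by
    rw [← Real.rpow_mul hc0.le (r+1) (α-1), ← Real.rpow_add hc0]
    congr 1
    ring
  calc α * c ^ r * ((c ^ (r+1)) ^ (α-1) * ∫ t in (0:ℝ)..1, (Sp r k / c ^ (r+1) + t * (1/c)) ^ (α-1))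
      = α * (c ^ r * (c ^ (r+1)) ^ (α-1)) * ∫ t in (0:ℝ)..1, (Sp r k / c ^ (r+1) + t * (1/c)) ^ (α-1) := by
        ring
    _ = α * c ^ (α*(r+1)-1) * ∫ t in (0:ℝ)..1, (Sp r k / c ^ (r+1) + t * (1/c)) ^ (α-1) := by
        rw [hexp]

/-- the increments ratio is nonincreasing -/
lemma d_step {r α : ℝ} (hr : 1 ≤ r) (hα : 2 ≤ α) (j : ℕ) :
    (Sp r (j+2) ^ α - Sp r (j+1) ^ α) * ((j+1:ℕ):ℝ) ^ (α*(r+1)-1)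
      ≤ (Sp r (j+1) ^ α - Sp r j ^ α) * ((j+2:ℕ):ℝ) ^ (α*(r+1)-1) := by
  set c1 : ℝ := ((j+1:ℕ):ℝ) with hc1
  set c2 : ℝ := ((j+2:ℕ):ℝ) with hc2
  have hc10 : (0:ℝ) < c1 := by rw [hc1]; exact_mod_cast Nat.succ_pos j
  have hc11 : (1:ℝ) ≤ c1 := by rw [hc1]; exact_mod_cast Nat.succ_le_succ (Nat.zero_le j)
  have hc20 : (0:ℝ) < c2 := by rw [hc2]; exact_mod_cast Nat.succ_pos (j+1)
  have hc12 : c1 ≤ c2 := by rw [hc1, hc2]; exact_mod_cast Nat.le_succ (j+1)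
  have hcr1 : (0:ℝ) < c1 ^ (r+1) := Real.rpow_pos_of_pos hc10 (r+1)
  have hcr2 : (0:ℝ) < c2 ^ (r+1) := Real.rpow_pos_of_pos hc20 (r+1)
  have h1 := incr_norm hr hα j
  have h2 := incr_norm hr hα (j+1)
  have e21 : ((j+1+1:ℕ):ℝ) = c2 := by rw [hc2]
  rw [e21] at h2
  rw [← hc1] at h1
  -- the psi comparison
  have hcomp : ∫ t in (0:ℝ)..1, (Sp r (j+1) / c2 ^ (r+1) + t * (1/c2)) ^ (α-1)
      ≤ ∫ t in (0:ℝ)..1, (Sp r j / c1 ^ (r+1) + t * (1/c1)) ^ (α-1) := by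
    apply psi_mono (by linarith)
    · exact div_nonneg (Sp_nonneg r j) hcr1.le
    · exact div_pos (Sp_pos r (by omega)) hcr2
    · positivity
    · positivity
    · exact one_div_le_one_div_of_le hc10 hc12
    · -- the mean comparison, from meanB
      have hm := meanB hr j
      rw [← hc1, ← hc2] at hm
      have hS2 : Sp r (j+2) = Sp r (j+1) + c2 ^ r := by
        have := Sp_succ r (j+1)
        rw [show ((j+1+1:ℕ):ℝ) = c2 by rw [hc2]] at this
        exact this
      have hS1 : Sp r (j+1) = Sp r j + c1 ^ r := by
        have := Sp_succ r j
        rw [← hc1] at this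
        exact this
      have key2 : (2*Sp r (j+1) + c2 ^ r) * c1 ^ (r+1)
          ≤ (2*Sp r j + c1 ^ r) * c2 ^ (r+1) := by
        rw [hS2, hS1] at hm
        rw [hS1]
        nlinarith [hm]
      have ec1 : c1 ^ (r+1) = c1 ^ r * c1 := by
        rw [Real.rpow_add hc10 r 1, Real.rpow_one]
      have ec2 : c2 ^ (r+1) = c2 ^ r * c2 := by
        rw [Real.rpow_add hc20 r 1, Real.rpow_one]
      have hcr1' : (0:ℝ) < c1 ^ r := Real.rpow_pos_of_pos hc10 r
      have hcr2' : (0:ℝ) < c2 ^ r := Real.rpow_pos_of_pos hc20 r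
      rw [← sub_nonneg]
      have e : (Sp r j / c1 ^ (r+1) + 1 / c1 / 2)
            - (Sp r (j+1) / c2 ^ (r+1) + 1 / c2 / 2)
          = ((2*Sp r j + c1 ^ r) * c2 ^ (r+1) - (2*Sp r (j+1) + c2 ^ r) * c1 ^ (r+1))
            / (2 * c1 ^ (r+1) * c2 ^ (r+1)) := by
        rw [ec1, ec2]
        field_simp
      rw [show (1:ℝ)/c1/2 = 1/c1/2 from rfl] at e
      calc (0:ℝ) ≤ ((2*Sp r j + c1 ^ r) * c2 ^ (r+1) - (2*Sp r (j+1) + c2 ^ r) * c1 ^ (r+1))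
            / (2 * c1 ^ (r+1) * c2 ^ (r+1)) := by
            apply div_nonneg (by linarith [key2]) (by positivity)
        _ = _ := e.symm
  -- conclude
  have hs1 : (0:ℝ) < c1 ^ (α*(r+1)-1) := Real.rpow_pos_of_pos hc10 _
  have hs2 : (0:ℝ) < c2 ^ (α*(r+1)-1) := Real.rpow_pos_of_pos hc20 _
  rw [h1, h2]
  calc α * c2 ^ (α*(r+1)-1) *
        (∫ t in (0:ℝ)..1, (Sp r (j+1) / c2 ^ (r+1) + t * (1/c2)) ^ (α-1)) * c1 ^ (α*(r+1)-1)
      = (α * c1 ^ (α*(r+1)-1) * c2 ^ (α*(r+1)-1)) *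
        (∫ t in (0:ℝ)..1, (Sp r (j+1) / c2 ^ (r+1) + t * (1/c2)) ^ (α-1)) := by ring
    _ ≤ (α * c1 ^ (α*(r+1)-1) * c2 ^ (α*(r+1)-1)) *
        (∫ t in (0:ℝ)..1, (Sp r j / c1 ^ (r+1) + t * (1/c1)) ^ (α-1)) := by
        apply mul_le_mul_of_nonneg_left hcomp
        positivity
    _ = α * c1 ^ (α*(r+1)-1) *
        (∫ t in (0:ℝ)..1, (Sp r j / c1 ^ (r+1) + t * (1/c1)) ^ (α-1)) * c2 ^ (α*(r+1)-1) := by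
        ring





lemma w_pos (s : ℝ) (j : ℕ) : (0:ℝ) < ((j+1:ℕ):ℝ) ^ s :=
  Real.rpow_pos_of_pos (by exact_mod_cast Nat.succ_pos j) s

lemma d_chain {r α : ℝ} (hr : 1 ≤ r) (hα : 2 ≤ α) {i j : ℕ} (hij : i ≤ j) :
    (Sp r (j+1) ^ α - Sp r j ^ α) * ((i+1:ℕ):ℝ) ^ (α*(r+1)-1)
      ≤ (Sp r (i+1) ^ α - Sp r i ^ α) * ((j+1:ℕ):ℝ) ^ (α*(r+1)-1) := by
  induction j, hij using Nat.le_induction with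
  | base => exact le_refl _
  | succ j hj ih =>
      have hadj := d_step hr hα j
      have hwj := w_pos (α*(r+1)-1) j
      have hwi := w_pos (α*(r+1)-1) i
      have hwj1 := w_pos (α*(r+1)-1) (j+1)
      refine le_of_mul_le_mul_right ?_ hwj
      have e : ((j+1+1:ℕ):ℝ) = ((j+2:ℕ):ℝ) := by push_cast; ring
      rw [e]
      calc (Sp r (j+2) ^ α - Sp r (j+1) ^ α) * ((i+1:ℕ):ℝ) ^ (α*(r+1)-1) * ((j+1:ℕ):ℝ) ^ (α*(r+1)-1)
          = ((Sp r (j+2) ^ α - Sp r (j+1) ^ α) * ((j+1:ℕ):ℝ) ^ (α*(r+1)-1)) * ((i+1:ℕ):ℝ) ^ (α*(r+1)-1) := by ring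
        _ ≤ ((Sp r (j+1) ^ α - Sp r j ^ α) * ((j+2:ℕ):ℝ) ^ (α*(r+1)-1)) * ((i+1:ℕ):ℝ) ^ (α*(r+1)-1) :=
            mul_le_mul_of_nonneg_right hadj hwi.le
        _ = ((Sp r (j+1) ^ α - Sp r j ^ α) * ((i+1:ℕ):ℝ) ^ (α*(r+1)-1)) * ((j+2:ℕ):ℝ) ^ (α*(r+1)-1) := by ring
        _ ≤ ((Sp r (i+1) ^ α - Sp r i ^ α) * ((j+1:ℕ):ℝ) ^ (α*(r+1)-1)) * ((j+2:ℕ):ℝ) ^ (α*(r+1)-1) :=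
            mul_le_mul_of_nonneg_right ih (w_pos _ (j+1)).le
        _ = (Sp r (i+1) ^ α - Sp r i ^ α) * ((j+2:ℕ):ℝ) ^ (α*(r+1)-1) * ((j+1:ℕ):ℝ) ^ (α*(r+1)-1) := by ring

lemma Sp_range (s : ℝ) (n : ℕ) : Sp s n = ∑ j ∈ Finset.range n, ((j+1:ℕ):ℝ) ^ s := by
  induction n with
  | zero => simp [Sp_zero]
  | succ n ih => rw [Sp_succ, Finset.sum_range_succ, ih]

lemma telescope {r α : ℝ} (hα : 2 ≤ α) (n : ℕ) :
    ∑ j ∈ Finset.range n, (Sp r (j+1) ^ α - Sp r j ^ α) = Sp r n ^ α := by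
  rw [Finset.sum_range_sub (f := fun j => Sp r j ^ α)]
  rw [Sp_zero, Real.zero_rpow (by linarith : α ≠ 0)]
  ring

lemma step_div {r α : ℝ} (hr : 1 ≤ r) (hα : 2 ≤ α) {n : ℕ} (hn : 1 ≤ n) :
    Sp r (n+1) ^ α / Sp (α*(r+1)-1) (n+1) ≤ Sp r n ^ α / Sp (α*(r+1)-1) n := by
  have hT : 0 < Sp (α*(r+1)-1) n := Sp_pos _ hn
  have hT1 : 0 < Sp (α*(r+1)-1) (n+1) := Sp_pos _ (by omega)
  rw [div_le_div_iff₀ hT1 hT]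
  have key : (Sp r (n+1) ^ α - Sp r n ^ α) * Sp (α*(r+1)-1) n
      ≤ Sp r n ^ α * ((n+1:ℕ):ℝ) ^ (α*(r+1)-1) := by
    calc (Sp r (n+1) ^ α - Sp r n ^ α) * Sp (α*(r+1)-1) n
        = ∑ j ∈ Finset.range n,
            (Sp r (n+1) ^ α - Sp r n ^ α) * ((j+1:ℕ):ℝ) ^ (α*(r+1)-1) := by
          rw [Sp_range (α*(r+1)-1) n, Finset.mul_sum]
      _ ≤ ∑ j ∈ Finset.range n,
            (Sp r (j+1) ^ α - Sp r j ^ α) * ((n+1:ℕ):ℝ) ^ (α*(r+1)-1) := by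
          apply Finset.sum_le_sum
          intro j hj
          exact d_chain hr hα (le_of_lt (Finset.mem_range.mp hj))
      _ = Sp r n ^ α * ((n+1:ℕ):ℝ) ^ (α*(r+1)-1) := by
          rw [← Finset.sum_mul, telescope (r := r) hα n]
  have hs1 : Sp (α*(r+1)-1) (n+1) = Sp (α*(r+1)-1) n + ((n+1:ℕ):ℝ) ^ (α*(r+1)-1) :=
    Sp_succ _ n
  rw [hs1]
  nlinarith [key]

theorem main (r α : ℝ) (hr : 1 ≤ r) (hα : 2 ≤ α) (m n : ℕ) (hm : 1 ≤ m) (hmn : m ≤ n) :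
    Sp r n ^ α / Sp (α*(r+1)-1) n ≤ Sp r m ^ α / Sp (α*(r+1)-1) m := by
  induction n, hmn using Nat.le_induction with
  | base => exact le_refl _
  | succ n hn ih =>
      exact le_trans (step_div hr hα (le_trans hm hn)) ih


end Stmt12

theorem stmt_12 (r α : ℝ) (hr : 1 ≤ r) (hα : 2 ≤ α) (m n : ℕ) (hm : 1 ≤ m) (hmn : m ≤ n) :
    (∑ i ∈ Finset.Icc 1 n, (i : ℝ) ^ r) ^ α / ∑ i ∈ Finset.Icc 1 n, (i : ℝ) ^ (α * (r + 1) - 1) ≤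
    (∑ i ∈ Finset.Icc 1 m, (i : ℝ) ^ r) ^ α /
      ∑ i ∈ Finset.Icc 1 m, (i : ℝ) ^ (α * (r + 1) - 1) := by
  have h := Stmt12.main r α hr hα m n hm hmn
  unfold Stmt12.Sp at h
  exact h
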